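/- arXiv:1105.3538 — 4 statements merged into one kernel-verified Lean document; each statement's English description precedes it below -/
import Mathlib

section
/- (Holland's schema theorem.) Assume ℓ ≥ 2. Let x ∈ Λ, let f : Ω → ℝ_{≥0} satisfy Σ_{j∈Ω} f_j x_j > 0, let c ∈ [0,1], p ∈ [0,1], and let y = U(C(F(x))), where F is proportional selection with fitness f, C is the crossover heuristic for one-point crossover with crossover rate c, and U is the mutation heuristic for independent bitwise mutation with all rates p_i = p. Then for every u ∈ Ω and k ∈ Ω_u, y_k^{(u)} ≥ ((Σ_{j ∈ Ω_{ū}} f_{j⊕k} x_{j⊕k}) / (Σ_{j∈Ω} f_j x_j)) · (1 − c·L(u)/(ℓ−1)) · (1−p)^{#u}. -/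
open Finset

noncomputable section

/-- `#u`: the number of one-bits of `u` (sum of binary digits). -/
def pc (u : ℕ) : ℕ := (Nat.digits 2 u).sum

/-- `ū`: the bitwise complement of `u` within `ℓ` bits. -/
def cpl (ℓ u : ℕ) : ℕ := u ^^^ (2 ^ ℓ - 1)

/-- `Ω_u`: the set of `v < 2^ℓ` with `v ⊗ u = v`. -/
def omg (ℓ u : ℕ) : Finset ℕ := (Finset.range (2 ^ ℓ)).filter (fun v => v &&& u = v)

/-- `I(u)`: the set of indices `i < ℓ` where bit `i` of `u` is one. -/
def idx (ℓ u : ℕ) : Finset ℕ := (Finset.range ℓ).filter (fun i => u.testBit i)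

/-- The schema average `x_k^{(u)} = Σ_{i ∈ Ω_{ū}} x_{i ⊕ k}`. -/
def schAvg (ℓ : ℕ) (x : ℕ → ℝ) (u k : ℕ) : ℝ := ∑ i ∈ omg ℓ (cpl ℓ u), x (i ^^^ k)

/-- The Walsh transform `x̂ = W x`, with `W_{i,j} = n^{-1/2} (-1)^{i^T j}`. -/
def walsh (ℓ : ℕ) (x : ℕ → ℝ) (k : ℕ) : ℝ :=
  (Real.sqrt (2 ^ ℓ))⁻¹ * ∑ j ∈ Finset.range (2 ^ ℓ), (-1 : ℝ) ^ pc (k &&& j) * x j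

/-- Proportional selection `F(x)_k = f_k x_k / Σ_j f_j x_j`. -/
def propSel (ℓ : ℕ) (f x : ℕ → ℝ) (k : ℕ) : ℝ :=
  f k * x k / ∑ j ∈ Finset.range (2 ^ ℓ), f j * x j

/-- The crossover heuristic for a crossover-mask distribution `χ`. -/
def crossH (ℓ : ℕ) (χ : ℕ → ℝ) (x : ℕ → ℝ) (k : ℕ) : ℝ :=
  ∑ i ∈ Finset.range (2 ^ ℓ), ∑ j ∈ Finset.range (2 ^ ℓ), x i * x j *
    ∑ m ∈ Finset.range (2 ^ ℓ), ((χ m + χ (cpl ℓ m)) / 2) *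
      (if (i &&& m) ^^^ (j &&& cpl ℓ m) = k then (1 : ℝ) else 0)

/-- The mutation heuristic for a mutation-mask distribution `μ`. -/
def mutH (ℓ : ℕ) (μ : ℕ → ℝ) (x : ℕ → ℝ) (k : ℕ) : ℝ :=
  ∑ j ∈ Finset.range (2 ^ ℓ), μ (j ^^^ k) * x j

/-- Mask distribution of independent bitwise mutation with rates `p i`:
`μ_m = ∏_i p_i^{m_i} (1-p_i)^{1-m_i}` (with `0^0 = 1`). -/
def mutDist (ℓ : ℕ) (p : ℕ → ℝ) (m : ℕ) : ℝ :=
  ∏ i ∈ Finset.range ℓ, (if m.testBit i then p i else 1 - p i)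

/-- Mask distribution of one-point crossover with crossover rate `c` (for `ℓ ≥ 2`). -/
def onePoint (ℓ : ℕ) (c : ℝ) (m : ℕ) : ℝ :=
  if m = 0 then 1 - c
  else if ∃ i ∈ Finset.Ico 1 ℓ, m = 2 ^ i - 1 then c / ((ℓ : ℝ) - 1)
  else 0

/-- `hi(u)`: index of the highest one-bit of `u` (`hi 0 = 0`). -/
def hiBit (u : ℕ) : ℕ := Nat.log2 u

/-- `lo(u)`: index of the lowest one-bit of `u` (`lo 0 = ℓ - 1`). -/
def loBit (ℓ u : ℕ) : ℕ := if u = 0 then ℓ - 1 else padicValNat 2 u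

/-- The defining length `L(u) = hi(u) - lo(u)`. -/
def defLen (ℓ u : ℕ) : ℕ := hiBit u - loBit ℓ u


section Helpers

-- basic bit lemmas
lemma cpl_lt {ℓ m : ℕ} (hm : m < 2 ^ ℓ) : cpl ℓ m < 2 ^ ℓ := by
  have h1 : 2 ^ ℓ - 1 < 2 ^ ℓ := Nat.sub_one_lt (by positivity)
  exact Nat.xor_lt_two_pow hm h1

lemma cpl_cpl (ℓ m : ℕ) : cpl ℓ (cpl ℓ m) = m := xor_cancel_right _ _

lemma and_sub_one {ℓ v : ℕ} (hv : v < 2 ^ ℓ) : v &&& (2 ^ ℓ - 1) = v := by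
  rw [Nat.and_two_pow_sub_one_eq_mod, Nat.mod_eq_of_lt hv]

lemma cpl_and {ℓ m u : ℕ} (hu : u < 2 ^ ℓ) : (cpl ℓ m) &&& u = (m &&& u) ^^^ u := by
  rw [cpl, Nat.and_xor_distrib_right, Nat.and_comm (2^ℓ-1) u, and_sub_one hu]

lemma mem_omg_cpl {ℓ u i : ℕ} (hu : u < 2 ^ ℓ) :
    i ∈ omg ℓ (cpl ℓ u) ↔ i < 2 ^ ℓ ∧ i &&& u = 0 := by
  simp only [omg, mem_filter, mem_range]
  constructor
  · rintro ⟨h1, h2⟩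
    refine ⟨h1, ?_⟩
    have : cpl ℓ u &&& u = 0 := by rw [cpl_and hu, Nat.and_self, Nat.xor_self]
    calc i &&& u = (i &&& cpl ℓ u) &&& u := by rw [h2]
    _ = i &&& (cpl ℓ u &&& u) := Nat.and_assoc _ _ _
    _ = 0 := by rw [this, Nat.and_zero]
  · rintro ⟨h1, h2⟩
    refine ⟨h1, ?_⟩
    rw [cpl, Nat.and_xor_distrib_left, h2, and_sub_one h1, Nat.zero_xor]

/-- reindexing the schema average as a sum over the schema set. -/
lemma schAvg_eq {ℓ u k : ℕ} (hu : u < 2 ^ ℓ) (hk : k &&& u = k) (hkl : k < 2 ^ ℓ) (z : ℕ → ℝ) :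
    schAvg ℓ z u k = ∑ w ∈ (Finset.range (2 ^ ℓ)).filter (fun w => w &&& u = k), z w := by
  refine Finset.sum_nbij' (fun i => i ^^^ k) (fun w => w ^^^ k) ?_ ?_ ?_ ?_ ?_
  · intro a ha
    rw [mem_omg_cpl hu] at ha
    simp only [mem_filter, mem_range]
    exact ⟨Nat.xor_lt_two_pow ha.1 hkl, by rw [Nat.and_xor_distrib_right, ha.2, hk, Nat.zero_xor]⟩
  · intro a ha
    simp only [mem_filter, mem_range] at ha
    rw [mem_omg_cpl hu]
    exact ⟨Nat.xor_lt_two_pow ha.1 hkl, by rw [Nat.and_xor_distrib_right, ha.2, hk, Nat.xor_self]⟩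
  · intro a _; exact xor_cancel_right _ _
  · intro a _; exact xor_cancel_right _ _
  · intro a _; rfl

lemma pc_rec (u : ℕ) : pc u = u % 2 + pc (u / 2) := by
  rcases Nat.eq_zero_or_pos u with h | h
  · simp [h, pc]
  · rw [pc, Nat.digits_def' (by norm_num : 1 < 2) h]; simp [pc]

lemma sum_range_double (m : ℕ) (g : ℕ → ℝ) :
    ∑ e ∈ range (2 * m), g e = ∑ e ∈ range m, (g (2 * e) + g (2 * e + 1)) := by
  induction m with
  | zero => simp
  | succ n ih =>
    have : 2 * (n + 1) = (2 * n + 1) + 1 := by ring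
    rw [this, Finset.sum_range_succ, Finset.sum_range_succ, ih, Finset.sum_range_succ, add_assoc]

lemma and_double_eq_zero (e b u : ℕ) (hb : b < 2) :
    (2 * e + b) &&& u = 0 ↔ e &&& (u / 2) = 0 ∧ (b = 0 ∨ u % 2 = 0) := by
  have h1 : ((2 * e + b) &&& u) / 2 = e &&& (u / 2) := by
    rw [Nat.and_div_two]; congr 1; omega
  have h2 : ((2 * e + b) &&& u) % 2 = 1 ↔ (2 * e + b) % 2 = 1 ∧ u % 2 = 1 :=
    Nat.and_mod_two_eq_one
  have h3 : (2 * e + b) % 2 = b := by omega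
  rw [h3] at h2
  constructor
  · intro h
    have d2 : ((2 * e + b) &&& u) / 2 = 0 := by omega
    have m2 : ((2 * e + b) &&& u) % 2 = 0 := by omega
    rw [h1] at d2
    refine ⟨d2, ?_⟩
    by_contra hc
    push_neg at hc
    have := h2.mpr ⟨by omega, by omega⟩
    omega
  · rintro ⟨hd, hm⟩
    have m2 : ((2 * e + b) &&& u) % 2 ≠ 1 := fun hh => by
      have := h2.mp hh; omega
    have d2 : ((2 * e + b) &&& u) / 2 = 0 := by rw [h1]; exact hd
    omega

lemma key_mut (p : ℝ) : ∀ ℓ u, u < 2 ^ ℓ →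
    ∑ e ∈ range (2 ^ ℓ), (if e &&& u = 0 then
        ∏ i ∈ range ℓ, (if e.testBit i then p else 1 - p) else 0)
      = (1 - p) ^ pc u := by
  intro ℓ
  induction ℓ with
  | zero =>
    intro u hu
    interval_cases u
    simp [pc]
  | succ n ih =>
    intro u hu
    have hrw : (2 : ℕ) ^ (n + 1) = 2 * 2 ^ n := by ring
    rw [hrw, sum_range_double]
    have hu2 : u / 2 < 2 ^ n := by omega
    have key : ∀ e b, b < 2 →
        (if (2 * e + b) &&& u = 0 then
          ∏ i ∈ range (n + 1), (if (2 * e + b).testBit i then p else 1 - p) else 0)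
        = (if e &&& (u / 2) = 0 ∧ (b = 0 ∨ u % 2 = 0) then
            (if b = 1 then p else 1 - p) *
              ∏ i ∈ range n, (if e.testBit i then p else 1 - p) else 0) := by
      intro e b hb
      simp only [and_double_eq_zero e b u hb]
      congr 1
      rw [Finset.prod_range_succ']
      have ht0 : (2 * e + b).testBit 0 = decide (b = 1) := by
        rw [Nat.testBit_zero]
        have : (2 * e + b) % 2 = b := by omega
        rw [this]
      have hts : ∀ i, (2 * e + b).testBit (i + 1) = e.testBit i := by
        intro i
        rw [Nat.testBit_add_one]
        congr 1
        omega
      rw [mul_comm]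
      simp only [hts, ht0, decide_eq_true_eq]
    have e1 : ∀ e, (if (2 * e) &&& u = 0 then
          ∏ i ∈ range (n + 1), (if (2 * e).testBit i then p else 1 - p) else 0)
        = (if e &&& (u / 2) = 0 then
            (1 - p) * ∏ i ∈ range n, (if e.testBit i then p else 1 - p) else 0) := by
      intro e
      have := key e 0 (by norm_num)
      simpa using this
    have e2 : ∀ e, (if (2 * e + 1) &&& u = 0 then
          ∏ i ∈ range (n + 1), (if (2 * e + 1).testBit i then p else 1 - p) else 0)
        = (if e &&& (u / 2) = 0 ∧ u % 2 = 0 then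
            p * ∏ i ∈ range n, (if e.testBit i then p else 1 - p) else 0) := by
      intro e
      have := key e 1 (by norm_num)
      simpa using this
    simp only [e1, e2]
    rw [Finset.sum_add_distrib]
    rcases Nat.even_or_odd u with he | ho
    · have hm : u % 2 = 0 := Nat.even_iff.mp he
      have pcu : pc u = pc (u / 2) := by rw [pc_rec]; omega
      simp only [hm, and_true, eq_self_iff_true, if_true]
      rw [pcu, ← ih (u / 2) hu2, ← Finset.sum_add_distrib]
      refine Finset.sum_congr rfl (fun e _ => ?_)
      by_cases h : e &&& (u / 2) = 0 <;> simp [h] <;> ring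
    · have hm : u % 2 = 1 := Nat.odd_iff.mp ho
      have hm' : ¬ (u % 2 = 0) := by omega
      have pcu : pc u = 1 + pc (u / 2) := by rw [pc_rec]; omega
      simp only [hm', and_false, if_false, Finset.sum_const_zero, add_zero]
      rw [pcu, pow_add, pow_one, ← ih (u / 2) hu2, Finset.mul_sum]
      refine Finset.sum_congr rfl (fun e _ => ?_)
      by_cases h : e &&& (u / 2) = 0 <;> simp [h]

lemma pow_sub_one_inj : Function.Injective (fun i : ℕ => 2 ^ i - 1) := by
  intro a b h
  simp only at h
  have ha : 1 ≤ 2 ^ a := Nat.one_le_two_pow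
  have hb : 1 ≤ 2 ^ b := Nat.one_le_two_pow
  have : (2:ℕ) ^ a = 2 ^ b := by omega
  exact Nat.pow_right_injective (by norm_num) this

lemma hiBit_lt {ℓ u : ℕ} (hu : u < 2 ^ ℓ) (h0 : u ≠ 0) : hiBit u < ℓ :=
  (Nat.log2_lt h0).mpr hu

lemma loBit_le_hiBit {ℓ u : ℕ} (h0 : u ≠ 0) : loBit ℓ u ≤ hiBit u := by
  rw [loBit, if_neg h0, hiBit]
  have hdvd : 2 ^ padicValNat 2 u ∣ u := pow_padicValNat_dvd
  have hle : 2 ^ padicValNat 2 u ≤ u := Nat.le_of_dvd (Nat.pos_of_ne_zero h0) hdvd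
  by_contra hc
  push_neg at hc
  have := Nat.log2_lt h0 |>.mp (by omega : Nat.log2 u < padicValNat 2 u)
  omega

lemma good_char {ℓ u : ℕ} (h0 : u ≠ 0) (i : ℕ) :
    ((2 ^ i - 1) &&& u = 0 ∨ (2 ^ i - 1) &&& u = u) ↔ (i ≤ loBit ℓ u ∨ hiBit u < i) := by
  rw [Nat.and_comm, Nat.and_two_pow_sub_one_eq_mod]
  have h1 : u % 2 ^ i = 0 ↔ i ≤ loBit ℓ u := by
    rw [loBit, if_neg h0, ← Nat.dvd_iff_mod_eq_zero]
    rw [padicValNat_dvd_iff]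
    simp [h0]
  have h2 : u % 2 ^ i = u ↔ hiBit u < i := by
    rw [Nat.mod_eq_iff_lt (by positivity), hiBit, Nat.log2_lt h0]
  rw [h1, h2]

lemma card_good {ℓ u : ℕ} (hℓ : 2 ≤ ℓ) (hu : u < 2 ^ ℓ) :
    ((Finset.Ico 1 ℓ).filter
      (fun i => i ≤ loBit ℓ u ∨ hiBit u < i)).card = ℓ - 1 - defLen ℓ u := by
  rcases eq_or_ne u 0 with h0 | h0
  · subst h0
    have h1 : ((Finset.Ico 1 ℓ).filter (fun i => i ≤ loBit ℓ 0 ∨ hiBit 0 < i)) = Finset.Ico 1 ℓ := by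
      refine Finset.filter_true_of_mem (fun i hi => ?_)
      simp only [Finset.mem_Ico] at hi
      right
      have : hiBit 0 = 0 := by simp [hiBit]
      omega
    rw [h1, Nat.card_Ico]
    have : hiBit 0 = 0 := by simp [hiBit]
    simp [defLen, loBit, this]
  · have hlh : loBit ℓ u ≤ hiBit u := loBit_le_hiBit h0
    have hh : hiBit u < ℓ := hiBit_lt hu h0
    have hset : ((Finset.Ico 1 ℓ).filter (fun i => i ≤ loBit ℓ u ∨ hiBit u < i))
        = Finset.Ico 1 (loBit ℓ u + 1) ∪ Finset.Ico (hiBit u + 1) ℓ := by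
      ext i
      simp only [Finset.mem_filter, Finset.mem_Ico, Finset.mem_union]
      omega
    rw [hset, Finset.card_union_of_disjoint, Nat.card_Ico, Nat.card_Ico, defLen]
    · omega
    · rw [Finset.disjoint_left]
      intro a ha hb
      simp only [Finset.mem_Ico] at ha hb
      omega

lemma chi_sum {ℓ : ℕ} (hℓ : 2 ≤ ℓ) (c : ℝ) {u : ℕ} (hu : u < 2 ^ ℓ) :
    ∑ m ∈ (Finset.range (2 ^ ℓ)).filter (fun m => m &&& u = 0 ∨ m &&& u = u), onePoint ℓ c m
      = 1 - c * (defLen ℓ u : ℝ) / ((ℓ : ℝ) - 1) := by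
  classical
  set A := (Finset.range (2 ^ ℓ)).filter (fun m => m &&& u = 0 ∨ m &&& u = u) with hA
  set P := (Finset.Ico 1 ℓ).image (fun i => 2 ^ i - 1) with hP
  set S := insert 0 (P.filter (fun m => m &&& u = 0 ∨ m &&& u = u)) with hS
  have h0P : (0 : ℕ) ∉ P := by
    simp only [hP, Finset.mem_image, Finset.mem_Ico]
    rintro ⟨i, ⟨hi1, hi2⟩, hi3⟩
    have : 2 ≤ 2 ^ i := by
      calc 2 = 2 ^ 1 := by norm_num
      _ ≤ 2 ^ i := Nat.pow_le_pow_right (by norm_num) hi1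
    omega
  have hSA : S ⊆ A := by
    intro m hm
    simp only [hS, Finset.mem_insert, Finset.mem_filter] at hm
    rcases hm with h | ⟨hmP, hgood⟩
    · subst h
      simp only [hA, Finset.mem_filter, Finset.mem_range]
      exact ⟨Nat.pow_pos (by norm_num), Or.inl (Nat.zero_and u)⟩
    · simp only [hA, Finset.mem_filter, Finset.mem_range]
      refine ⟨?_, hgood⟩
      simp only [hP, Finset.mem_image, Finset.mem_Ico] at hmP
      obtain ⟨i, ⟨_, hi2⟩, rfl⟩ := hmP
      have : (2:ℕ) ^ i ≤ 2 ^ ℓ := Nat.pow_le_pow_right (by norm_num) (le_of_lt hi2)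
      have : (1:ℕ) ≤ 2 ^ i := Nat.one_le_two_pow
      omega
  have hvanish : ∀ m ∈ A, m ∉ S → onePoint ℓ c m = 0 := by
    intro m hmA hmS
    simp only [hS, Finset.mem_insert, Finset.mem_filter, not_or, not_and_or] at hmS
    obtain ⟨hm0, hmPf⟩ := hmS
    have hgood : m &&& u = 0 ∨ m &&& u = u := by
      simp only [hA, Finset.mem_filter] at hmA; exact hmA.2
    have hmP : m ∉ P := by tauto
    rw [onePoint, if_neg hm0, if_neg, ]
    intro ⟨i, hi, hmi⟩
    exact hmP (by simp only [hP, Finset.mem_image]; exact ⟨i, hi, hmi.symm⟩)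
  rw [← Finset.sum_subset hSA hvanish]
  rw [hS, Finset.sum_insert (fun h => h0P (Finset.mem_of_mem_filter 0 h))]
  have hchi0 : onePoint ℓ c 0 = 1 - c := by simp [onePoint]
  have hchiP : ∀ m ∈ P.filter (fun m => m &&& u = 0 ∨ m &&& u = u),
      onePoint ℓ c m = c / ((ℓ : ℝ) - 1) := by
    intro m hm
    simp only [Finset.mem_filter, hP, Finset.mem_image] at hm
    obtain ⟨⟨i, hi, rfl⟩, _⟩ := hm
    have hm0 : (2:ℕ) ^ i - 1 ≠ 0 := by
      simp only [Finset.mem_Ico] at hi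
      have : 2 ≤ 2 ^ i := by
        calc 2 = 2 ^ 1 := by norm_num
        _ ≤ 2 ^ i := Nat.pow_le_pow_right (by norm_num) hi.1
      omega
    rw [onePoint, if_neg hm0, if_pos ⟨i, hi, rfl⟩]
  rw [Finset.sum_congr rfl hchiP, Finset.sum_const, hchi0]
  have hcard : (P.filter (fun m => m &&& u = 0 ∨ m &&& u = u)).card = ℓ - 1 - defLen ℓ u := by
    rcases eq_or_ne u 0 with h0 | h0
    · subst h0
      have heq : P.filter (fun m => m &&& 0 = 0 ∨ m &&& 0 = 0) = P :=
        Finset.filter_true_of_mem (fun m _ => Or.inl (Nat.and_zero m))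
      rw [heq, hP, Finset.card_image_of_injective _ pow_sub_one_inj, Nat.card_Ico]
      have h2 : hiBit 0 = 0 := by simp [hiBit]
      simp [defLen, loBit, h2]
    · rw [hP, Finset.filter_image, Finset.card_image_of_injective _ pow_sub_one_inj]
      rw [Finset.filter_congr (fun i _ => by rw [good_char h0 i])]
      exact card_good hℓ hu
  rw [hcard]
  have hL : defLen ℓ u ≤ ℓ - 1 := by
    rcases eq_or_ne u 0 with h0 | h0
    · have h2 : hiBit 0 = 0 := by simp [hiBit]
      simp [defLen, loBit, h0, h2]
    · have := hiBit_lt hu h0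
      simp only [defLen]
      omega
  have hcast : ((ℓ - 1 - defLen ℓ u : ℕ) : ℝ) = (ℓ : ℝ) - 1 - (defLen ℓ u : ℝ) := by
    have h1 : (1:ℕ) ≤ ℓ := by omega
    push_cast [Nat.cast_sub hL, Nat.cast_sub h1]
    ring
  rw [nsmul_eq_mul, hcast]
  have hne : (ℓ : ℝ) - 1 ≠ 0 := by
    have : (2:ℝ) ≤ (ℓ:ℝ) := by exact_mod_cast hℓ
    linarith
  field_simp
  ring

end Helpers

section Main

variable {ℓ : ℕ}

lemma mutDist_nonneg {p : ℝ} (hp : p ∈ Set.Icc (0:ℝ) 1) (m : ℕ) :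
    0 ≤ mutDist ℓ (fun _ => p) m := by
  unfold mutDist
  refine Finset.prod_nonneg (fun i _ => ?_)
  by_cases h : m.testBit i = true
  · rw [if_pos h]; exact hp.1
  · rw [if_neg h]; linarith [hp.2]

lemma mut_sum_schema {p : ℝ} {u k j : ℕ} (hu : u < 2 ^ ℓ)
    (hj : j < 2 ^ ℓ) (hjk : j &&& u = k) :
    ∑ k' ∈ (Finset.range (2 ^ ℓ)).filter (fun w => w &&& u = k),
        mutDist ℓ (fun _ => p) (j ^^^ k') = (1 - p) ^ pc u := by
  have hre : ∑ k' ∈ (Finset.range (2 ^ ℓ)).filter (fun w => w &&& u = k),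
      mutDist ℓ (fun _ => p) (j ^^^ k')
      = ∑ e ∈ (Finset.range (2 ^ ℓ)).filter (fun e => e &&& u = 0),
          mutDist ℓ (fun _ => p) e := by
    refine Finset.sum_nbij' (fun k' => j ^^^ k') (fun e => j ^^^ e) ?_ ?_ ?_ ?_ ?_
    · intro a ha
      simp only [Finset.mem_filter, Finset.mem_range] at ha ⊢
      exact ⟨Nat.xor_lt_two_pow hj ha.1,
        by rw [Nat.and_xor_distrib_right, hjk, ha.2, Nat.xor_self]⟩
    · intro a ha
      simp only [Finset.mem_filter, Finset.mem_range] at ha ⊢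
      exact ⟨Nat.xor_lt_two_pow hj ha.1,
        by rw [Nat.and_xor_distrib_right, hjk, ha.2, Nat.xor_zero]⟩
    · intro a _; show j ^^^ (j ^^^ a) = a
      rw [← Nat.xor_assoc, Nat.xor_self, Nat.zero_xor]
    · intro a _; show j ^^^ (j ^^^ a) = a
      rw [← Nat.xor_assoc, Nat.xor_self, Nat.zero_xor]
    · intro a _; rfl
  rw [hre, Finset.sum_filter]
  exact key_mut p ℓ u hu

lemma mut_bound {p : ℝ} (hp : p ∈ Set.Icc (0:ℝ) 1) (w : ℕ → ℝ)
    (hw : ∀ i ∈ Finset.range (2 ^ ℓ), 0 ≤ w i) {u k : ℕ} (hu : u < 2 ^ ℓ) :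
    ∑ k' ∈ (Finset.range (2 ^ ℓ)).filter (fun v => v &&& u = k),
        mutH ℓ (mutDist ℓ (fun _ => p)) w k'
      ≥ (1 - p) ^ pc u *
        ∑ j ∈ (Finset.range (2 ^ ℓ)).filter (fun v => v &&& u = k), w j := by
  set Sset := (Finset.range (2 ^ ℓ)).filter (fun v => v &&& u = k) with hSset
  have hsub : Sset ⊆ Finset.range (2 ^ ℓ) := Finset.filter_subset _ _
  calc ∑ k' ∈ Sset, mutH ℓ (mutDist ℓ (fun _ => p)) w k'
      = ∑ j ∈ Finset.range (2 ^ ℓ), ∑ k' ∈ Sset,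
          mutDist ℓ (fun _ => p) (j ^^^ k') * w j := by
        simp only [mutH]; exact Finset.sum_comm
    _ ≥ ∑ j ∈ Sset, ∑ k' ∈ Sset, mutDist ℓ (fun _ => p) (j ^^^ k') * w j := by
        refine Finset.sum_le_sum_of_subset_of_nonneg hsub (fun i hi _ => ?_)
        exact Finset.sum_nonneg (fun k' _ =>
          mul_nonneg (mutDist_nonneg hp _) (hw i hi))
    _ = ∑ j ∈ Sset, (1 - p) ^ pc u * w j := by
        refine Finset.sum_congr rfl (fun j hj => ?_)
        rw [← Finset.sum_mul]
        simp only [hSset, Finset.mem_filter, Finset.mem_range] at hj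
        rw [mut_sum_schema hu hj.1 hj.2]
    _ = (1 - p) ^ pc u * ∑ j ∈ Sset, w j := by rw [Finset.mul_sum]

lemma tgt_lt {ℓ i j m : ℕ} (hi : i < 2 ^ ℓ) (hj : j < 2 ^ ℓ) :
    (i &&& m) ^^^ (j &&& cpl ℓ m) < 2 ^ ℓ :=
  Nat.xor_lt_two_pow (lt_of_le_of_lt Nat.and_le_left hi)
    (lt_of_le_of_lt Nat.and_le_left hj)

lemma tgt_and_left {ℓ u k i j m : ℕ} (hu : u < 2 ^ ℓ) (hi : i &&& u = k)
    (hm : m &&& u = u) : ((i &&& m) ^^^ (j &&& cpl ℓ m)) &&& u = k := by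
  rw [Nat.and_xor_distrib_right, Nat.and_assoc, Nat.and_assoc, cpl_and hu, hm,
    Nat.xor_self, Nat.and_zero, Nat.xor_zero, hi]

lemma tgt_and_right {ℓ u k i j m : ℕ} (hu : u < 2 ^ ℓ) (hj : j &&& u = k)
    (hm : m &&& u = 0) : ((i &&& m) ^^^ (j &&& cpl ℓ m)) &&& u = k := by
  simp [Nat.and_xor_distrib_right, Nat.and_assoc, cpl_and hu, hm, hj]

lemma cross_bound (χ z : ℕ → ℝ) {u k : ℕ} (hu : u < 2 ^ ℓ)
    (hχ : ∀ m, 0 ≤ χ m) (hz0 : ∀ i ∈ Finset.range (2 ^ ℓ), 0 ≤ z i)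
    (hz1 : ∑ i ∈ Finset.range (2 ^ ℓ), z i = 1) :
    ∑ k' ∈ (Finset.range (2 ^ ℓ)).filter (fun v => v &&& u = k), crossH ℓ χ z k'
      ≥ (∑ m ∈ (Finset.range (2 ^ ℓ)).filter (fun m => m &&& u = 0 ∨ m &&& u = u),
            (χ m + χ (cpl ℓ m)) / 2) *
        ∑ w ∈ (Finset.range (2 ^ ℓ)).filter (fun v => v &&& u = k), z w := by
  classical
  set R := Finset.range (2 ^ ℓ) with hR
  set Sset := R.filter (fun v => v &&& u = k) with hSset
  set G := R.filter (fun m => m &&& u = 0 ∨ m &&& u = u) with hG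
  set t := fun m => (χ m + χ (cpl ℓ m)) / 2 with ht
  have ht0 : ∀ m, 0 ≤ t m := fun m => by
    have := hχ m; have := hχ (cpl ℓ m); simp only [ht]; linarith
  set δ : ℕ → ℕ → ℕ → ℝ := fun i j m =>
    if ((i &&& m) ^^^ (j &&& cpl ℓ m)) &&& u = k then 1 else 0 with hδ
  have hδ0 : ∀ i j m, 0 ≤ δ i j m := fun i j m => by
    simp only [hδ]; positivity
  -- Step 1: rewrite the schema sum of the crossover as an m-outer triple sum
  have hmain : ∑ k' ∈ Sset, crossH ℓ χ z k'
      = ∑ m ∈ R, t m * ∑ i ∈ R, ∑ j ∈ R, z i * z j * δ i j m := by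
    simp only [crossH, ← ht]
    calc ∑ k' ∈ Sset, ∑ i ∈ R, ∑ j ∈ R, z i * z j *
            ∑ m ∈ R, t m * (if (i &&& m) ^^^ (j &&& cpl ℓ m) = k' then (1:ℝ) else 0)
        = ∑ i ∈ R, ∑ k' ∈ Sset, ∑ j ∈ R, z i * z j *
            ∑ m ∈ R, t m * (if (i &&& m) ^^^ (j &&& cpl ℓ m) = k' then (1:ℝ) else 0) :=
          Finset.sum_comm
      _ = ∑ i ∈ R, ∑ j ∈ R, ∑ k' ∈ Sset, z i * z j *
            ∑ m ∈ R, t m * (if (i &&& m) ^^^ (j &&& cpl ℓ m) = k' then (1:ℝ) else 0) :=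
          Finset.sum_congr rfl (fun i _ => Finset.sum_comm)
      _ = ∑ i ∈ R, ∑ j ∈ R, z i * z j * ∑ m ∈ R, t m * δ i j m := by
          refine Finset.sum_congr rfl (fun i hi => Finset.sum_congr rfl (fun j hj => ?_))
          rw [← Finset.mul_sum]
          congr 1
          rw [Finset.sum_comm]
          refine Finset.sum_congr rfl (fun m _ => ?_)
          rw [← Finset.mul_sum]
          congr 1
          rw [Finset.sum_ite_eq]
          simp only [hδ]
          have hmem : ((i &&& m) ^^^ (j &&& cpl ℓ m)) ∈ Sset
              ↔ ((i &&& m) ^^^ (j &&& cpl ℓ m)) &&& u = k := by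
            simp only [hSset, Finset.mem_filter, hR, Finset.mem_range,
              tgt_lt (Finset.mem_range.mp hi) (Finset.mem_range.mp hj), true_and]
          by_cases h : ((i &&& m) ^^^ (j &&& cpl ℓ m)) &&& u = k
          · rw [if_pos (hmem.mpr h), if_pos h]
          · rw [if_neg (fun hh => h (hmem.mp hh)), if_neg h]
      _ = ∑ i ∈ R, ∑ j ∈ R, ∑ m ∈ R, t m * (z i * z j * δ i j m) := by
          refine Finset.sum_congr rfl (fun i _ => Finset.sum_congr rfl (fun j _ => ?_))
          rw [Finset.mul_sum]
          exact Finset.sum_congr rfl (fun m _ => by ring)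
      _ = ∑ i ∈ R, ∑ m ∈ R, ∑ j ∈ R, t m * (z i * z j * δ i j m) :=
          Finset.sum_congr rfl (fun i _ => Finset.sum_comm)
      _ = ∑ m ∈ R, ∑ i ∈ R, ∑ j ∈ R, t m * (z i * z j * δ i j m) :=
          Finset.sum_comm
      _ = ∑ m ∈ R, t m * ∑ i ∈ R, ∑ j ∈ R, z i * z j * δ i j m := by
          refine Finset.sum_congr rfl (fun m _ => ?_)
          rw [Finset.mul_sum]
          exact Finset.sum_congr rfl (fun i _ => by rw [Finset.mul_sum])
  rw [hmain]
  -- Step 2: restrict to good masks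
  have hGsub : G ⊆ R := Finset.filter_subset _ _
  have hWnn : ∀ m, 0 ≤ ∑ i ∈ R, ∑ j ∈ R, z i * z j * δ i j m := fun m =>
    Finset.sum_nonneg fun i hi => Finset.sum_nonneg fun j hj =>
      mul_nonneg (mul_nonneg (hz0 i hi) (hz0 j hj)) (hδ0 i j m)
  have hstep2 : ∑ m ∈ R, t m * ∑ i ∈ R, ∑ j ∈ R, z i * z j * δ i j m
      ≥ ∑ m ∈ G, t m * ∑ i ∈ R, ∑ j ∈ R, z i * z j * δ i j m :=
    Finset.sum_le_sum_of_subset_of_nonneg hGsub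
      (fun m _ _ => mul_nonneg (ht0 m) (hWnn m))
  -- Step 3: per good mask, bound the double sum below by the schema sum
  have hstep3 : ∀ m ∈ G, ∑ i ∈ R, ∑ j ∈ R, z i * z j * δ i j m ≥ ∑ w ∈ Sset, z w := by
    intro m hm
    simp only [hG, Finset.mem_filter] at hm
    rcases hm.2 with hm0 | hmu
    · -- m &&& u = 0 : indicator is 1 whenever j ∈ Sset
      calc ∑ i ∈ R, ∑ j ∈ R, z i * z j * δ i j m
          ≥ ∑ i ∈ R, ∑ j ∈ Sset, z i * z j * δ i j m := by
            refine Finset.sum_le_sum (fun i hi => ?_)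
            refine Finset.sum_le_sum_of_subset_of_nonneg (Finset.filter_subset _ _)
              (fun j hj _ => mul_nonneg (mul_nonneg (hz0 i hi) (hz0 j hj)) (hδ0 i j m))
        _ = ∑ i ∈ R, ∑ j ∈ Sset, z i * z j := by
            refine Finset.sum_congr rfl (fun i _ => Finset.sum_congr rfl (fun j hj => ?_))
            simp only [hSset, Finset.mem_filter] at hj
            simp only [hδ, tgt_and_right hu hj.2 hm0, if_true, mul_one]
        _ = (∑ i ∈ R, z i) * ∑ w ∈ Sset, z w := by
            rw [Finset.sum_mul_sum]
        _ = ∑ w ∈ Sset, z w := by rw [hz1, one_mul]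
    · -- m &&& u = u : indicator is 1 whenever i ∈ Sset
      calc ∑ i ∈ R, ∑ j ∈ R, z i * z j * δ i j m
          ≥ ∑ i ∈ Sset, ∑ j ∈ R, z i * z j * δ i j m := by
            refine Finset.sum_le_sum_of_subset_of_nonneg (Finset.filter_subset _ _)
              (fun i hi _ => Finset.sum_nonneg (fun j hj =>
                mul_nonneg (mul_nonneg (hz0 i hi) (hz0 j hj)) (hδ0 i j m)))
        _ = ∑ i ∈ Sset, ∑ j ∈ R, z i * z j := by
            refine Finset.sum_congr rfl (fun i hi => Finset.sum_congr rfl (fun j _ => ?_))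
            simp only [hSset, Finset.mem_filter] at hi
            simp only [hδ, tgt_and_left hu hi.2 hmu, if_true, mul_one]
        _ = (∑ w ∈ Sset, z w) * ∑ i ∈ R, z i := by
            rw [Finset.sum_mul_sum]
        _ = ∑ w ∈ Sset, z w := by rw [hz1, mul_one]
  have hstep4 : ∑ m ∈ G, t m * ∑ i ∈ R, ∑ j ∈ R, z i * z j * δ i j m
      ≥ ∑ m ∈ G, t m * ∑ w ∈ Sset, z w := by
    refine Finset.sum_le_sum (fun m hm => ?_)
    exact mul_le_mul_of_nonneg_left (hstep3 m hm) (ht0 m)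
  have : ∑ m ∈ G, t m * ∑ w ∈ Sset, z w = (∑ m ∈ G, t m) * ∑ w ∈ Sset, z w := by
    rw [Finset.sum_mul]
  linarith [hstep2, hstep4, this.ge]

lemma sym_sum (χ : ℕ → ℝ) {u : ℕ} (hu : u < 2 ^ ℓ) :
    ∑ m ∈ (Finset.range (2 ^ ℓ)).filter (fun m => m &&& u = 0 ∨ m &&& u = u),
        (χ m + χ (cpl ℓ m)) / 2
      = ∑ m ∈ (Finset.range (2 ^ ℓ)).filter (fun m => m &&& u = 0 ∨ m &&& u = u), χ m := by
  have hmem : ∀ a ∈ (Finset.range (2 ^ ℓ)).filter (fun m => m &&& u = 0 ∨ m &&& u = u),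
      cpl ℓ a ∈ (Finset.range (2 ^ ℓ)).filter (fun m => m &&& u = 0 ∨ m &&& u = u) := by
    intro a ha
    simp only [Finset.mem_filter, Finset.mem_range] at ha ⊢
    refine ⟨cpl_lt ha.1, ?_⟩
    rw [cpl_and hu]
    rcases ha.2 with h | h
    · right; rw [h, Nat.zero_xor]
    · left; rw [h, Nat.xor_self]
  have h : ∑ m ∈ (Finset.range (2 ^ ℓ)).filter (fun m => m &&& u = 0 ∨ m &&& u = u),
      χ (cpl ℓ m)
      = ∑ m ∈ (Finset.range (2 ^ ℓ)).filter (fun m => m &&& u = 0 ∨ m &&& u = u), χ m :=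
    Finset.sum_nbij' (cpl ℓ) (cpl ℓ) hmem hmem (fun a _ => cpl_cpl ℓ a)
      (fun a _ => cpl_cpl ℓ a) (fun a _ => rfl)
  rw [← Finset.sum_div, Finset.sum_add_distrib, h]
  ring

end Main

/-- **Holland's schema theorem.**  For `ℓ ≥ 2`, `x ∈ Λ`, fitness `f ≥ 0` with
`Σ f_j x_j > 0`, crossover rate `c ∈ [0,1]`, mutation rate `p ∈ [0,1]`, and
`y = U(C(F(x)))` (proportional selection, one-point crossover, bitwise mutation),
for every `u ∈ Ω` and `k ∈ Ω_u`:
`y_k^{(u)} ≥ (Σ_{j∈Ω_{ū}} f_{j⊕k} x_{j⊕k} / Σ_j f_j x_j) (1 - c L(u)/(ℓ-1)) (1-p)^{#u}`. -/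
theorem holland_schema_theorem
    (ℓ : ℕ) (hℓ : 2 ≤ ℓ) (x f : ℕ → ℝ)
    (hx0 : ∀ i ∈ Finset.range (2 ^ ℓ), 0 ≤ x i)
    (hx1 : ∑ i ∈ Finset.range (2 ^ ℓ), x i = 1)
    (hf : ∀ j ∈ Finset.range (2 ^ ℓ), 0 ≤ f j)
    (hpos : 0 < ∑ j ∈ Finset.range (2 ^ ℓ), f j * x j)
    (c p : ℝ) (hc : c ∈ Set.Icc (0 : ℝ) 1) (hp : p ∈ Set.Icc (0 : ℝ) 1)
    (y : ℕ → ℝ)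
    (hy : y = mutH ℓ (mutDist ℓ (fun _ => p)) (crossH ℓ (onePoint ℓ c) (propSel ℓ f x)))
    (u : ℕ) (hu : u < 2 ^ ℓ) (k : ℕ) (hk : k ∈ omg ℓ u) :
    schAvg ℓ y u k ≥
      ((∑ j ∈ omg ℓ (cpl ℓ u), f (j ^^^ k) * x (j ^^^ k)) /
          ∑ j ∈ Finset.range (2 ^ ℓ), f j * x j) *
        (1 - c * (defLen ℓ u : ℝ) / ((ℓ : ℝ) - 1)) * (1 - p) ^ pc u := by
  have hkmem : k < 2 ^ ℓ ∧ k &&& u = k := by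
    simpa [omg, Finset.mem_filter, Finset.mem_range] using hk
  obtain ⟨hkl, hku⟩ := hkmem
  set D := ∑ j ∈ Finset.range (2 ^ ℓ), f j * x j with hD
  set Sset := (Finset.range (2 ^ ℓ)).filter (fun v => v &&& u = k) with hSset
  set z := propSel ℓ f x with hzdef
  have hz0 : ∀ i ∈ Finset.range (2 ^ ℓ), 0 ≤ z i := fun i hi =>
    div_nonneg (mul_nonneg (hf i hi) (hx0 i hi)) hpos.le
  have hz1 : ∑ i ∈ Finset.range (2 ^ ℓ), z i = 1 := by
    simp only [hzdef, propSel, ← hD]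
    rw [← Finset.sum_div, div_self hpos.ne']
  have hSz : ∑ w ∈ Sset, z w = (∑ w ∈ Sset, f w * x w) / D := by
    simp only [hzdef, propSel, ← hD]
    rw [Finset.sum_div]
  have hnum : ∑ j ∈ omg ℓ (cpl ℓ u), f (j ^^^ k) * x (j ^^^ k)
      = ∑ w ∈ Sset, f w * x w := by
    have := schAvg_eq hu hku hkl (fun w => f w * x w)
    simpa [schAvg, hSset] using this
  have hSy : schAvg ℓ y u k = ∑ k' ∈ Sset, y k' := schAvg_eq hu hku hkl y
  set w := crossH ℓ (onePoint ℓ c) z with hwdef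
  have hℓR : (1 : ℝ) ≤ (ℓ : ℝ) - 1 := by
    have : (2:ℝ) ≤ (ℓ:ℝ) := by exact_mod_cast hℓ
    linarith
  have hχnn : ∀ m, 0 ≤ onePoint ℓ c m := by
    intro m
    rw [onePoint]
    split_ifs with h1 h2
    · linarith [hc.2]
    · exact div_nonneg hc.1 (by linarith)
    · exact le_refl 0
  have hw0 : ∀ i ∈ Finset.range (2 ^ ℓ), 0 ≤ w i := by
    intro i _
    simp only [hwdef, crossH]
    refine Finset.sum_nonneg fun a ha => Finset.sum_nonneg fun b hb => ?_
    refine mul_nonneg (mul_nonneg (hz0 a ha) (hz0 b hb)) ?_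
    refine Finset.sum_nonneg fun m _ => mul_nonneg ?_ ?_
    · have := hχnn m; have := hχnn (cpl ℓ m); linarith
    · positivity
  have hcross := cross_bound (onePoint ℓ c) z hu (k := k) hχnn hz0 hz1
  rw [sym_sum (onePoint ℓ c) hu, chi_sum hℓ c hu] at hcross
  have hmut := mut_bound hp w hw0 hu (k := k)
  have hA : (0:ℝ) ≤ (1 - p) ^ pc u := pow_nonneg (by linarith [hp.2]) _
  have hB0 : (0:ℝ) ≤ 1 - c * (defLen ℓ u : ℝ) / ((ℓ:ℝ) - 1) := by
    rw [← chi_sum hℓ c hu]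
    exact Finset.sum_nonneg fun m _ => hχnn m
  rw [hSy, hy, hnum]
  calc ∑ k' ∈ Sset, mutH ℓ (mutDist ℓ fun _ => p) w k'
      ≥ (1 - p) ^ pc u * ∑ j ∈ Sset, w j := hmut
    _ ≥ (1 - p) ^ pc u *
        ((1 - c * (defLen ℓ u : ℝ) / ((ℓ:ℝ) - 1)) * ∑ v ∈ Sset, z v) :=
        mul_le_mul_of_nonneg_left hcross hA
    _ = (∑ w ∈ Sset, f w * x w) / D *
        (1 - c * (defLen ℓ u : ℝ) / ((ℓ:ℝ) - 1)) * (1 - p) ^ pc u := by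
        rw [hSz]; ring
end
end

section
/- For every u ∈ Ω and every real vector x indexed by Ω, the vector of schema averages equals the inverse Walsh transform (over Ω_u) of the rescaled Walsh coefficients of x: x^{(u)} = W^{(u)} x̂^{(u)}; explicitly, for each k ∈ Ω_u, Σ_{i ∈ Ω_{ū}} x_{i⊕k} = 2^{−#u/2} Σ_{j ∈ Ω_u} (−1)^{j^T k} · 2^{#ū/2} (Wx)_j. -/
open Finset

noncomputable section

lemma pc_sum (ℓ a : ℕ) (ha : a < 2 ^ ℓ) :
    pc a = ∑ i ∈ Finset.range ℓ, (if a.testBit i then 1 else 0) := by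
  induction ℓ generalizing a with
  | zero =>
    interval_cases a
    simp [pc]
  | succ n ih =>
    rcases Nat.eq_zero_or_pos a with rfl | hpos
    · simp [pc]
    · have h1 : pc a = a % 2 + pc (a / 2) := by
        unfold pc
        rw [Nat.digits_def' (by norm_num : (1:ℕ) < 2) hpos]
        simp
      have h2 : a / 2 < 2 ^ n := by
        rw [pow_succ] at ha; omega
      rw [h1, ih _ h2, Finset.sum_range_succ']
      have h3 : ∀ i, a.testBit (i + 1) = (a / 2).testBit i := fun i => Nat.testBit_succ a i
      simp only [h3, Nat.testBit_zero]
      rcases Nat.mod_two_eq_zero_or_one a with h | h <;> simp [h] <;> omega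

lemma sign_pc (ℓ a : ℕ) (ha : a < 2 ^ ℓ) :
    ((-1 : ℝ)) ^ pc a = ∏ i ∈ Finset.range ℓ, (if a.testBit i then (-1 : ℝ) else 1) := by
  rw [pc_sum ℓ a ha, ← Finset.prod_pow_eq_pow_sum]
  exact Finset.prod_congr rfl fun i _ => by split <;> simp

lemma sign_xor (ℓ a b : ℕ) (ha : a < 2 ^ ℓ) (hb : b < 2 ^ ℓ) :
    ((-1 : ℝ)) ^ pc (a ^^^ b) = (-1) ^ pc a * (-1) ^ pc b := by
  rw [sign_pc ℓ _ (Nat.xor_lt_two_pow ha hb), sign_pc ℓ a ha, sign_pc ℓ b hb,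
    ← Finset.prod_mul_distrib]
  refine Finset.prod_congr rfl fun i _ => ?_
  rw [Nat.testBit_xor]
  cases h1 : a.testBit i <;> cases h2 : b.testBit i <;> simp

lemma mem_omg {ℓ u j : ℕ} : j ∈ omg ℓ u ↔ j < 2 ^ ℓ ∧ j &&& u = j := by
  simp [omg]

lemma and_self_iff_bits {j u : ℕ} :
    j &&& u = j ↔ ∀ i, j.testBit i = true → u.testBit i = true := by
  constructor
  · intro h i hi
    have := congrArg (fun m => m.testBit i) h
    simp only [Nat.testBit_land, hi, Bool.true_and] at this
    exact this
  · intro h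
    refine Nat.eq_of_testBit_eq fun i => ?_
    rw [Nat.testBit_land]
    cases hj : j.testBit i
    · simp
    · simp [h i hj]

lemma testBit_lt_of_true {a i ℓ : ℕ} (ha : a < 2 ^ ℓ) (h : a.testBit i = true) : i < ℓ := by
  by_contra hc
  have : a.testBit i = false :=
    Nat.testBit_lt_two_pow (lt_of_lt_of_le ha (Nat.pow_le_pow_right (by norm_num) (by omega)))
  rw [h] at this; simp at this

lemma sum_two_pow_lt {n : ℕ} {t : Finset ℕ} (h : t ⊆ Finset.range n) :
    ∑ i ∈ t, 2 ^ i < 2 ^ n := by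
  have h1 : ∑ i ∈ t, 2 ^ i ≤ ∑ i ∈ Finset.range n, 2 ^ i :=
    Finset.sum_le_sum_of_subset h
  have h2 : ∑ i ∈ Finset.range n, 2 ^ i = (2 ^ n - 1) / (2 - 1) := Nat.geomSum_eq le_rfl n
  have h3 : (0:ℕ) < 2 ^ n := Nat.pow_pos (by norm_num)
  omega

lemma testBit_sum_two_pow (t : Finset ℕ) (j : ℕ) :
    (∑ i ∈ t, 2 ^ i).testBit j = decide (j ∈ t) := by
  induction t using Finset.induction_on_max generalizing j with
  | empty => simp
  | insert a t ha ih =>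
    rw [Finset.sum_insert (fun h => lt_irrefl a (ha a h))]
    have hts : t ⊆ Finset.range a := fun b hb => Finset.mem_range.mpr (ha b hb)
    have hsl : ∑ i ∈ t, 2 ^ i < 2 ^ a := sum_two_pow_lt hts
    rcases lt_trichotomy j a with h | rfl | h
    · rw [Nat.testBit_two_pow_add_gt h, ih]
      simp only [Finset.mem_insert]
      have : j ≠ a := by omega
      simp [this]
    · rw [Nat.testBit_two_pow_add_eq, Nat.testBit_lt_two_pow hsl]
      simp
    · have hlt : 2 ^ a + ∑ i ∈ t, 2 ^ i < 2 ^ j := by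
        have : 2 ^ (a + 1) ≤ 2 ^ j := Nat.pow_le_pow_right (by norm_num) (by omega)
        rw [pow_succ] at this; omega
      rw [Nat.testBit_lt_two_pow hlt]
      have h1 : j ≠ a := by omega
      have h2 : j ∉ t := fun hj => absurd (ha j hj) (by omega)
      simp [h1, h2]

lemma sum_idx (ℓ j : ℕ) (hj : j < 2 ^ ℓ) : ∑ i ∈ idx ℓ j, 2 ^ i = j := by
  refine Nat.eq_of_testBit_eq fun i => ?_
  rw [testBit_sum_two_pow]
  by_cases h : i < ℓ
  · simp [idx, h]
  · have : j.testBit i = false :=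
      Nat.testBit_lt_two_pow (lt_of_lt_of_le hj (Nat.pow_le_pow_right (by norm_num) (by omega)))
    simp [idx, h, this]

lemma card_idx (ℓ u : ℕ) (hu : u < 2 ^ ℓ) : (idx ℓ u).card = pc u := by
  rw [pc_sum ℓ u hu, idx]
  rw [Finset.card_filter]

lemma orth (ℓ u w : ℕ) (hu : u < 2 ^ ℓ) (hw : w < 2 ^ ℓ) :
    ∑ j ∈ omg ℓ u, ((-1 : ℝ)) ^ pc (j &&& w)
      = if u &&& w = 0 then (2 : ℝ) ^ pc u else 0 := by
  have hidxsub : ∀ {a : ℕ}, idx ℓ a ⊆ Finset.range ℓ := fun {a} => Finset.filter_subset _ _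
  have h1 : ∑ j ∈ omg ℓ u, ((-1:ℝ)) ^ pc (j &&& w)
      = ∑ t ∈ (idx ℓ u).powerset, ∏ i ∈ t, (if w.testBit i then (-1:ℝ) else 1) := by
    refine Finset.sum_bij' (fun j _ => idx ℓ j) (fun t _ => ∑ i ∈ t, 2 ^ i) ?_ ?_ ?_ ?_ ?_
    · intro j hj
      obtain ⟨hj2, hja⟩ := mem_omg.mp hj
      refine Finset.mem_powerset.mpr fun i hi => ?_
      simp only [idx, Finset.mem_filter, Finset.mem_range] at hi ⊢
      exact ⟨hi.1, and_self_iff_bits.mp hja i hi.2⟩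
    · intro t ht
      rw [Finset.mem_powerset] at ht
      refine mem_omg.mpr ⟨sum_two_pow_lt (ht.trans hidxsub), ?_⟩
      rw [and_self_iff_bits]
      intro i hi
      rw [testBit_sum_two_pow] at hi
      have hit : i ∈ t := by simpa using hi
      have := ht hit
      simp only [idx, Finset.mem_filter] at this
      exact this.2
    · intro j hj
      exact sum_idx ℓ j (mem_omg.mp hj).1
    · intro t ht
      rw [Finset.mem_powerset] at ht
      ext i
      simp only [idx, Finset.mem_filter, Finset.mem_range, testBit_sum_two_pow,
        decide_eq_true_eq]
      constructor
      · exact fun h => h.2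
      · intro h
        exact ⟨Finset.mem_range.mp (hidxsub (ht h)), h⟩
    · intro j hj
      obtain ⟨hj2, _⟩ := mem_omg.mp hj
      rw [sign_pc ℓ _ (Nat.and_lt_two_pow j hw)]
      simp only [idx]
      rw [Finset.prod_filter]
      refine Finset.prod_congr rfl fun i _ => ?_
      rw [Nat.testBit_land]
      cases j.testBit i <;> cases w.testBit i <;> simp
  rw [h1]
  have h2 : ∑ t ∈ (idx ℓ u).powerset, ∏ i ∈ t, (if w.testBit i then (-1:ℝ) else 1)
      = ∏ i ∈ idx ℓ u, ((if w.testBit i then (-1:ℝ) else 1) + 1) := by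
    rw [Finset.prod_add]
    exact Finset.sum_congr rfl fun t _ => by simp
  rw [h2]
  by_cases h : u &&& w = 0
  · rw [if_pos h]
    have : ∀ i ∈ idx ℓ u, ((if w.testBit i then (-1:ℝ) else 1) + 1) = 2 := by
      intro i hi
      simp only [idx, Finset.mem_filter] at hi
      have hbit : w.testBit i = false := by
        have := congrArg (fun m => m.testBit i) h
        simp only [Nat.testBit_land, Nat.zero_testBit, hi.2, Bool.true_and] at this
        exact this
      rw [hbit]; norm_num
    rw [Finset.prod_congr rfl this, Finset.prod_const, card_idx ℓ u hu]
  · rw [if_neg h]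
    obtain ⟨i, hi, -⟩ := Nat.exists_most_significant_bit h
    have hiw : w.testBit i = true := by
      have := Nat.testBit_land u w i; rw [hi] at this
      exact (Bool.and_eq_true _ _).mp this.symm |>.2
    have hiu : u.testBit i = true := by
      have := Nat.testBit_land u w i; rw [hi] at this
      exact (Bool.and_eq_true _ _).mp this.symm |>.1
    have hil : i < ℓ := testBit_lt_of_true hu hiu
    refine Finset.prod_eq_zero (i := i) ?_ ?_
    · simp [idx, hil, hiu]
    · rw [hiw]; norm_num

lemma pc_add_pc_cpl (ℓ u : ℕ) (hu : u < 2 ^ ℓ) : pc u + pc (cpl ℓ u) = ℓ := by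
  have h1 : (0:ℕ) < 2 ^ ℓ := Nat.pow_pos (by norm_num)
  have hc : cpl ℓ u < 2 ^ ℓ := Nat.xor_lt_two_pow hu (by omega)
  rw [pc_sum ℓ u hu, pc_sum ℓ _ hc, ← Finset.sum_add_distrib]
  have : ∀ i ∈ Finset.range ℓ,
      ((if u.testBit i then 1 else 0) + if (cpl ℓ u).testBit i then 1 else 0) = 1 := by
    intro i hi
    rw [Finset.mem_range] at hi
    have : (cpl ℓ u).testBit i = !u.testBit i := by
      rw [cpl, Nat.testBit_xor, Nat.testBit_two_pow_sub_one]
      simp [hi]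
    rw [this]
    cases u.testBit i <;> simp
  rw [Finset.sum_congr rfl this]
  simp

/-- The schema averages are the inverse Walsh transform (over `Ω_u`) of the rescaled
Walsh coefficients: `x^{(u)} = W^{(u)} x̂^{(u)}`, i.e. for each `k ∈ Ω_u`,
`Σ_{i ∈ Ω_{ū}} x_{i⊕k} = 2^{-#u/2} Σ_{j ∈ Ω_u} (-1)^{j^T k} 2^{#ū/2} (Wx)_j`. -/
theorem schema_averages_eq_walsh
    (ℓ : ℕ) (hℓ : 1 ≤ ℓ) (x : ℕ → ℝ)
    (u : ℕ) (hu : u < 2 ^ ℓ) (k : ℕ) (hk : k ∈ omg ℓ u) :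
    schAvg ℓ x u k =
      (Real.sqrt 2 ^ pc u)⁻¹ *
        ∑ j ∈ omg ℓ u, (-1 : ℝ) ^ pc (j &&& k) *
          (Real.sqrt 2 ^ pc (cpl ℓ u) * walsh ℓ x j) := by
  obtain ⟨hk2, hkand⟩ := mem_omg.mp hk
  have hpow : (0:ℕ) < 2 ^ ℓ := Nat.pow_pos (by norm_num)
  set s : ℝ := Real.sqrt 2 with hs
  have hs0 : 0 < s := Real.sqrt_pos.mpr (by norm_num)
  have hss : s * s = 2 := Real.mul_self_sqrt (by norm_num)
  have hsqrt : Real.sqrt (2 ^ ℓ) = s ^ ℓ := by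
    rw [show ((2:ℝ) ^ ℓ) = (s ^ ℓ) ^ 2 by
      rw [← pow_mul, mul_comm, pow_mul]; congr 1; rw [sq]; exact hss.symm]
    exact Real.sqrt_sq (pow_nonneg hs0.le ℓ)
  -- Step 1: push everything into a double sum and swap
  have main : ∑ j ∈ omg ℓ u, (-1 : ℝ) ^ pc (j &&& k) * (s ^ pc (cpl ℓ u) * walsh ℓ x j)
      = s ^ pc (cpl ℓ u) * (s ^ ℓ)⁻¹ * (2:ℝ) ^ pc u * schAvg ℓ x u k := by
    simp only [walsh, hsqrt, Finset.mul_sum]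
    have step1 : ∀ j ∈ omg ℓ u, ∀ m ∈ Finset.range (2 ^ ℓ),
      (-1 : ℝ) ^ pc (j &&& k) * (s ^ pc (cpl ℓ u) * ((s ^ ℓ)⁻¹ * ((-1) ^ pc (j &&& m) * x m)))
      = s ^ pc (cpl ℓ u) * (s ^ ℓ)⁻¹ * ((-1) ^ pc (j &&& (k ^^^ m)) * x m) := by
      intro j hj m hm
      rw [Nat.and_xor_distrib_left,
        sign_xor ℓ _ _ (Nat.and_lt_two_pow j hk2) (Nat.and_lt_two_pow j (Finset.mem_range.mp hm))]
      ring
    rw [Finset.sum_congr rfl fun j hj => Finset.sum_congr rfl fun m hm => step1 j hj m hm]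
    rw [Finset.sum_comm]
    -- Step 2: evaluate the inner sum via orthogonality
    have step2 : ∀ m ∈ Finset.range (2 ^ ℓ),
        ∑ j ∈ omg ℓ u, s ^ pc (cpl ℓ u) * (s ^ ℓ)⁻¹ * ((-1:ℝ) ^ pc (j &&& (k ^^^ m)) * x m)
        = s ^ pc (cpl ℓ u) * (s ^ ℓ)⁻¹ * x m *
            (if u &&& (k ^^^ m) = 0 then (2:ℝ) ^ pc u else 0) := by
      intro m hm
      rw [← Finset.mul_sum]
      have : ∑ j ∈ omg ℓ u, ((-1:ℝ) ^ pc (j &&& (k ^^^ m)) * x m)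
          = (∑ j ∈ omg ℓ u, (-1:ℝ) ^ pc (j &&& (k ^^^ m))) * x m := by
        rw [Finset.sum_mul]
      rw [this, orth ℓ u (k ^^^ m) hu (Nat.xor_lt_two_pow hk2 (Finset.mem_range.mp hm))]
      ring
    rw [Finset.sum_congr rfl step2]
    -- Step 3: extract the constant and reduce to a filtered sum
    have step3 : ∑ m ∈ Finset.range (2 ^ ℓ),
        s ^ pc (cpl ℓ u) * (s ^ ℓ)⁻¹ * x m * (if u &&& (k ^^^ m) = 0 then (2:ℝ) ^ pc u else 0)
        = s ^ pc (cpl ℓ u) * (s ^ ℓ)⁻¹ * (2:ℝ) ^ pc u *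
            ∑ m ∈ (Finset.range (2 ^ ℓ)).filter (fun m => u &&& (k ^^^ m) = 0), x m := by
      rw [Finset.mul_sum, ← Finset.sum_filter_of_ne (by intro m _ h; by_contra hc; apply h; rw [if_neg hc]; ring)]
      exact Finset.sum_congr rfl fun m hm => by
        rw [if_pos (Finset.mem_filter.mp hm).2]; ring
    rw [step3]
    -- Step 4: the filtered sum is the schema average
    have step4 : ∑ m ∈ (Finset.range (2 ^ ℓ)).filter (fun m => u &&& (k ^^^ m) = 0), x m
        = schAvg ℓ x u k := by
      rw [schAvg]
      refine Finset.sum_bij' (fun m _ => m ^^^ k) (fun i _ => i ^^^ k) ?_ ?_ ?_ ?_ ?_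
      · intro m hm
        obtain ⟨hm1, hm2⟩ := Finset.mem_filter.mp hm
        rw [Finset.mem_range] at hm1
        refine mem_omg.mpr ⟨Nat.xor_lt_two_pow hm1 hk2, and_self_iff_bits.mpr fun i hi => ?_⟩
        have hil : i < ℓ := testBit_lt_of_true (Nat.xor_lt_two_pow hm1 hk2) hi
        have hub : u.testBit i = false := by
          have hb := congrArg (fun a => a.testBit i) hm2
          simp only [Nat.testBit_land, Nat.testBit_xor, Nat.zero_testBit] at hb
          rw [Nat.testBit_xor] at hi
          cases hk' : k.testBit i <;> cases hm' : m.testBit i <;>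
            cases hu' : u.testBit i <;> simp_all
        rw [cpl, Nat.testBit_xor, hub, Nat.testBit_two_pow_sub_one]
        simp [hil]
      · intro i hi
        obtain ⟨hi1, hi2⟩ := mem_omg.mp hi
        refine Finset.mem_filter.mpr ⟨Finset.mem_range.mpr (Nat.xor_lt_two_pow hi1 hk2), ?_⟩
        have hk' : k ^^^ (i ^^^ k) = i := by
          rw [Nat.xor_comm i k, ← Nat.xor_assoc, Nat.xor_self, Nat.zero_xor]
        rw [hk']
        refine Nat.eq_of_testBit_eq fun n => ?_
        rw [Nat.testBit_land, Nat.zero_testBit]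
        cases hin : i.testBit n
        · simp
        · have hnl : n < ℓ := testBit_lt_of_true hi1 hin
          have := and_self_iff_bits.mp hi2 n hin
          rw [cpl, Nat.testBit_xor, Nat.testBit_two_pow_sub_one] at this
          simp only [hnl, decide_true] at this
          cases hun : u.testBit n
          · simp
          · rw [hun] at this; simp at this
      · intro m _; simp [Nat.xor_assoc]
      · intro i _; simp [Nat.xor_assoc]
      · intro m _; simp [Nat.xor_assoc]
    rw [step4]
  rw [main]
  -- Step 5: the scalar constant is 1
  have hexp : s ^ ℓ = s ^ pc u * s ^ pc (cpl ℓ u) := by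
    rw [← pow_add, pc_add_pc_cpl ℓ u hu]
  have h2pc : (2:ℝ) ^ pc u = s ^ pc u * s ^ pc u := by
    rw [← hss, mul_pow]
  rw [hexp, h2pc]
  have hne : s ^ pc u ≠ 0 := pow_ne_zero _ hs0.ne'
  have hne2 : s ^ pc (cpl ℓ u) ≠ 0 := pow_ne_zero _ hs0.ne'
  field_simp
end
end

section
/- (Exact schema theorem for crossover.) Let x ∈ Λ, let χ be a crossover-mask distribution, and let y = C(x). Then for every u ∈ Ω and every k ∈ Ω_u, y_k^{(u)} = Σ_{m ∈ Ω} ((χ_m + χ_{m̄})/2) · x_{k⊗m}^{(u⊗m)} · x_{k⊗m̄}^{(u⊗m̄)}. -/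
open Finset

noncomputable section

private lemma hiBitFalse {n t ℓ : ℕ} (h : n < 2 ^ ℓ) (ht : ℓ ≤ t) : n.testBit t = false :=
  Nat.testBit_eq_false_of_lt (lt_of_lt_of_le h (Nat.pow_le_pow_right (by norm_num) ht))

private lemma cpl_testBit (ℓ m t : ℕ) :
    (cpl ℓ m).testBit t = ((m.testBit t).xor (decide (t < ℓ))) := by
  simp [cpl, Nat.testBit_xor, Bool.xor]

private lemma boolKey (a b c c' d e : Bool)
    (hc : c' = (!c) ∨ (d = false ∧ e = false)) (he : (e && d) = e) :
    (((a && c).xor (b && c') && d) = e) ↔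
      ((a && (d && c)) = (e && c) ∧ (b && (d && c')) = (e && c')) := by
  rcases hc with rfl | ⟨rfl, rfl⟩
  · cases a <;> cases b <;> cases c <;> cases d <;> cases e <;> simp_all
  · cases a <;> cases b <;> cases c <;> cases c' <;> simp_all

private lemma keyIff (ℓ u k i j m : ℕ) (hu : u < 2 ^ ℓ) (hk : k &&& u = k) :
    ((((i &&& m) ^^^ (j &&& cpl ℓ m)) &&& u = k) ↔
      (i &&& (u &&& m) = k &&& m ∧ j &&& (u &&& cpl ℓ m) = k &&& cpl ℓ m)) := by
  have hkb : ∀ t, (k.testBit t && u.testBit t) = k.testBit t := by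
    intro t
    have := congrArg (fun n => n.testBit t) hk
    simpa [Nat.testBit_and] using this
  have bit : ∀ t, (((((i &&& m) ^^^ (j &&& cpl ℓ m)) &&& u).testBit t = k.testBit t) ↔
      (((i &&& (u &&& m)).testBit t = (k &&& m).testBit t) ∧
       ((j &&& (u &&& cpl ℓ m)).testBit t = (k &&& cpl ℓ m).testBit t))) := by
    intro t
    have hb := boolKey (i.testBit t) (j.testBit t) (m.testBit t) ((cpl ℓ m).testBit t)
      (u.testBit t) (k.testBit t) ?_ (hkb t)
    · simpa [Nat.testBit_and, Nat.testBit_xor, Bool.xor, Bool.and_assoc] using hb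
    · rcases Nat.lt_or_ge t ℓ with h | h
      · left; simp [cpl_testBit, h, Bool.xor]
      · right
        have hd : u.testBit t = false := hiBitFalse hu h
        refine ⟨hd, ?_⟩
        have := hkb t
        rw [hd] at this
        simpa using this.symm
  constructor
  · intro h
    exact ⟨Nat.eq_of_testBit_eq fun t => ((bit t).mp (by rw [h])).1,
           Nat.eq_of_testBit_eq fun t => ((bit t).mp (by rw [h])).2⟩
  · rintro ⟨h1, h2⟩
    exact Nat.eq_of_testBit_eq fun t => (bit t).mpr ⟨by rw [h1], by rw [h2]⟩

private lemma andAnd (u k a : ℕ) (hk : k &&& u = k) :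
    (k &&& a) &&& (u &&& a) = k &&& a := by
  refine Nat.eq_of_testBit_eq fun t => ?_
  have := congrArg (fun n => n.testBit t) hk
  simp only [Nat.testBit_and] at this ⊢
  cases hkt : k.testBit t <;> cases hut : u.testBit t <;> cases a.testBit t <;> simp_all

private lemma schAvg_eq_s5 (ℓ : ℕ) (x : ℕ → ℝ) (v w : ℕ) (hv : v < 2 ^ ℓ) (hw : w &&& v = w) :
    schAvg ℓ x v w = ∑ i ∈ (Finset.range (2 ^ ℓ)).filter (fun i => i &&& v = w), x i := by
  have hwlt : w < 2 ^ ℓ := lt_of_le_of_lt (hw ▸ Nat.and_le_right) hv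
  have hwb : ∀ t, (w.testBit t && v.testBit t) = w.testBit t := by
    intro t
    have := congrArg (fun n => n.testBit t) hw
    simpa [Nat.testBit_and] using this
  refine Finset.sum_bij' (fun a _ => a ^^^ w) (fun b _ => b ^^^ w) ?_ ?_ ?_ ?_ ?_
  · intro a ha
    simp only [omg, Finset.mem_filter, Finset.mem_range] at ha
    obtain ⟨ha1, ha2⟩ := ha
    have hab : ∀ t, (a.testBit t && v.testBit t) = false := by
      intro t
      rcases Nat.lt_or_ge t ℓ with h | h
      · have := congrArg (fun n => n.testBit t) ha2
        simp only [Nat.testBit_and, cpl_testBit, h, decide_true, Bool.xor] at this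
        revert this
        cases a.testBit t <;> cases v.testBit t <;> simp
      · simp [hiBitFalse ha1 h]
    simp only [Finset.mem_filter, Finset.mem_range]
    refine ⟨Nat.xor_lt_two_pow ha1 hwlt, Nat.eq_of_testBit_eq fun t => ?_⟩
    have h1 := hab t
    have h2 := hwb t
    simp only [Nat.testBit_and, Nat.testBit_xor] at h1 h2 ⊢
    revert h1 h2
    cases a.testBit t <;> cases v.testBit t <;> cases w.testBit t <;> simp
  · intro b hb
    simp only [Finset.mem_filter, Finset.mem_range] at hb
    obtain ⟨hb1, hb2⟩ := hb
    have hbb : ∀ t, (b.testBit t && v.testBit t) = w.testBit t := by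
      intro t
      have := congrArg (fun n => n.testBit t) hb2
      simpa [Nat.testBit_and] using this
    simp only [omg, Finset.mem_filter, Finset.mem_range]
    refine ⟨Nat.xor_lt_two_pow hb1 hwlt, Nat.eq_of_testBit_eq fun t => ?_⟩
    rcases Nat.lt_or_ge t ℓ with h | h
    · have h1 := hbb t
      have h2 := hwb t
      simp only [Nat.testBit_and, Nat.testBit_xor, cpl_testBit, h, decide_true, Bool.xor]
      revert h1 h2
      cases b.testBit t <;> cases v.testBit t <;> cases w.testBit t <;> simp
    · have h1 : b.testBit t = false := hiBitFalse hb1 h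
      have h2 : w.testBit t = false := hiBitFalse hwlt h
      simp [Nat.testBit_and, Nat.testBit_xor, h1, h2]
  · intro a _; simp [Nat.xor_assoc]
  · intro b _; simp [Nat.xor_assoc]
  · intro a _; rfl

/-- **Exact schema theorem for crossover.**  For `x ∈ Λ`, a crossover-mask distribution
`χ`, `y = C(x)`, `u ∈ Ω` and `k ∈ Ω_u`:
`y_k^{(u)} = Σ_m ((χ_m + χ_{m̄})/2) x_{k⊗m}^{(u⊗m)} x_{k⊗m̄}^{(u⊗m̄)}`. -/
theorem exact_schema_theorem_for_crossover
    (ℓ : ℕ) (hℓ : 1 ≤ ℓ) (x χ : ℕ → ℝ)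
    (hx0 : ∀ i ∈ Finset.range (2 ^ ℓ), 0 ≤ x i)
    (hx1 : ∑ i ∈ Finset.range (2 ^ ℓ), x i = 1)
    (hχ0 : ∀ m ∈ Finset.range (2 ^ ℓ), 0 ≤ χ m)
    (hχ1 : ∑ m ∈ Finset.range (2 ^ ℓ), χ m = 1)
    (u : ℕ) (hu : u < 2 ^ ℓ) (k : ℕ) (hk : k ∈ omg ℓ u) :
    schAvg ℓ (crossH ℓ χ x) u k =
      ∑ m ∈ Finset.range (2 ^ ℓ), ((χ m + χ (cpl ℓ m)) / 2) *
        schAvg ℓ x (u &&& m) (k &&& m) *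
        schAvg ℓ x (u &&& cpl ℓ m) (k &&& cpl ℓ m) := by
  classical
  obtain ⟨hkN, hku⟩ : k < 2 ^ ℓ ∧ k &&& u = k := by
    simpa [omg, Finset.mem_filter, Finset.mem_range] using hk
  rw [schAvg_eq_s5 ℓ _ u k hu hku]
  have hstep : ∀ w, crossH ℓ χ x w = ∑ i ∈ Finset.range (2 ^ ℓ), ∑ j ∈ Finset.range (2 ^ ℓ),
      ∑ m ∈ Finset.range (2 ^ ℓ), (x i * x j * (((χ m + χ (cpl ℓ m)) / 2) *
        (if (i &&& m) ^^^ (j &&& cpl ℓ m) = w then (1 : ℝ) else 0))) := by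
    intro w
    unfold crossH
    refine Finset.sum_congr rfl fun i _ => Finset.sum_congr rfl fun j _ => ?_
    rw [Finset.mul_sum]
  have lhs_eq : ∑ w ∈ (Finset.range (2 ^ ℓ)).filter (fun w => w &&& u = k), crossH ℓ χ x w
      = ∑ i ∈ Finset.range (2 ^ ℓ), ∑ j ∈ Finset.range (2 ^ ℓ), ∑ m ∈ Finset.range (2 ^ ℓ),
        (x i * x j * ((χ m + χ (cpl ℓ m)) / 2)) *
          (if ((i &&& m) ^^^ (j &&& cpl ℓ m)) &&& u = k then (1 : ℝ) else 0) := by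
    simp only [hstep]
    rw [Finset.sum_comm]
    refine Finset.sum_congr rfl fun i hi => ?_
    rw [Finset.sum_comm]
    refine Finset.sum_congr rfl fun j hj => ?_
    rw [Finset.sum_comm]
    refine Finset.sum_congr rfl fun m hm => ?_
    simp only [Finset.mem_range] at hi hj
    simp only [← mul_assoc]
    rw [← Finset.mul_sum, Finset.sum_ite_eq]
    have hmem : ((i &&& m) ^^^ (j &&& cpl ℓ m)) ∈
        (Finset.range (2 ^ ℓ)).filter (fun w => w &&& u = k) ↔
        ((i &&& m) ^^^ (j &&& cpl ℓ m)) &&& u = k := by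
      simp [Finset.mem_filter, Finset.mem_range,
        Nat.xor_lt_two_pow (lt_of_le_of_lt Nat.and_le_left hi)
          (lt_of_le_of_lt Nat.and_le_left hj)]
    rw [if_congr hmem rfl rfl]
  rw [lhs_eq]
  rw [show (∑ i ∈ Finset.range (2 ^ ℓ), ∑ j ∈ Finset.range (2 ^ ℓ), ∑ m ∈ Finset.range (2 ^ ℓ),
        (x i * x j * ((χ m + χ (cpl ℓ m)) / 2)) *
          (if ((i &&& m) ^^^ (j &&& cpl ℓ m)) &&& u = k then (1 : ℝ) else 0))
      = ∑ m ∈ Finset.range (2 ^ ℓ), ∑ i ∈ Finset.range (2 ^ ℓ), ∑ j ∈ Finset.range (2 ^ ℓ),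
        (x i * x j * ((χ m + χ (cpl ℓ m)) / 2)) *
          (if ((i &&& m) ^^^ (j &&& cpl ℓ m)) &&& u = k then (1 : ℝ) else 0)
    from (Finset.sum_congr rfl fun i _ => Finset.sum_comm).trans Finset.sum_comm]
  refine Finset.sum_congr rfl fun m _ => ?_
  rw [schAvg_eq_s5 ℓ x (u &&& m) (k &&& m) (lt_of_le_of_lt Nat.and_le_left hu) (andAnd u k m hku),
    schAvg_eq_s5 ℓ x (u &&& cpl ℓ m) (k &&& cpl ℓ m) (lt_of_le_of_lt Nat.and_le_left hu)
      (andAnd u k (cpl ℓ m) hku)]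
  rw [Finset.sum_filter, Finset.sum_filter, mul_assoc, Finset.sum_mul_sum, Finset.mul_sum]
  refine Finset.sum_congr rfl fun i _ => ?_
  rw [Finset.mul_sum]
  refine Finset.sum_congr rfl fun j _ => ?_
  have hA := keyIff ℓ u k i j m hu hku
  by_cases h1 : i &&& (u &&& m) = k &&& m
  · by_cases h2 : j &&& (u &&& cpl ℓ m) = k &&& cpl ℓ m
    · rw [if_pos (hA.mpr ⟨h1, h2⟩), if_pos h1, if_pos h2]; ring
    · rw [if_neg (fun h => h2 (hA.mp h).2), if_pos h1, if_neg h2]; ring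
  · rw [if_neg (fun h => h1 (hA.mp h).1), if_neg h1]; ring
end
end

section
/- (The mutation heuristic in the Walsh basis.) Let x ∈ Λ, let U be the mutation heuristic for independent bitwise mutation with rates p_0,…,p_{ℓ−1} ∈ [0,1], set q_i = 1 − 2p_i, and let y = U(x). Then for every u ∈ Ω and every k ∈ Ω_u, ŷ_k^{(u)} = x̂_k^{(u)} · ∏_{i ∈ I(k)} q_i, where x̂ = Wx, ŷ = Wy, and ẑ_k^{(u)} = 2^{#ū/2} ẑ_k. -/
open Finset

noncomputable section

lemma neg_one_pc {ℓ u : ℕ} (hu : u < 2 ^ ℓ) :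
    ((-1 : ℝ)) ^ pc u = ∏ i ∈ Finset.range ℓ, (if u.testBit i then (-1 : ℝ) else 1) := by
  induction ℓ generalizing u with
  | zero => interval_cases u; simp [pc]
  | succ n ih =>
    have h2 : u / 2 < 2 ^ n := by
      rw [Nat.div_lt_iff_lt_mul (by norm_num : 0 < 2)]
      calc u < 2 ^ (n+1) := hu
        _ = 2 ^ n * 2 := by ring
    rw [Finset.prod_range_succ', ]
    simp only [Nat.testBit_succ]
    rw [← ih h2, pc_rec u, pow_add]
    rcases Nat.mod_two_eq_zero_or_one u with h | h <;>
      simp [Nat.testBit_zero, h, mul_comm]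

lemma neg_one_pc_and_xor {ℓ k a b : ℕ} (hk : k < 2 ^ ℓ) :
    ((-1:ℝ)) ^ pc (k &&& (a ^^^ b)) = (-1:ℝ) ^ pc (k &&& a) * (-1:ℝ) ^ pc (k &&& b) := by
  have h1 : k &&& (a ^^^ b) < 2 ^ ℓ := lt_of_le_of_lt Nat.and_le_left hk
  have h2 : k &&& a < 2 ^ ℓ := lt_of_le_of_lt Nat.and_le_left hk
  have h3 : k &&& b < 2 ^ ℓ := lt_of_le_of_lt Nat.and_le_left hk
  rw [neg_one_pc h1, neg_one_pc h2, neg_one_pc h3, ← Finset.prod_mul_distrib]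
  refine Finset.prod_congr rfl fun i _ => ?_
  simp only [Nat.testBit_and, Nat.testBit_xor]
  cases k.testBit i <;> cases a.testBit i <;> cases b.testBit i <;> norm_num

lemma sum_prod_testBit (ℓ : ℕ) (g : ℕ → Bool → ℝ) :
    ∑ m ∈ Finset.range (2 ^ ℓ), ∏ i ∈ Finset.range ℓ, g i (m.testBit i)
      = ∏ i ∈ Finset.range ℓ, (g i false + g i true) := by
  induction ℓ with
  | zero => simp
  | succ n ih =>
    have hsplit : (2:ℕ) ^ (n+1) = 2 ^ n + 2 ^ n := by ring
    have hdisj : Disjoint (Finset.range (2^n))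
        ((Finset.range (2^n)).map (addLeftEmbedding (2^n))) := by
      rw [Finset.disjoint_left]
      intro x hx hx'
      simp only [Finset.mem_map, Finset.mem_range, addLeftEmbedding_apply] at hx hx'
      omega
    rw [hsplit, Finset.range_add, Finset.sum_union hdisj, Finset.sum_map]
    have e1 : ∀ m ∈ Finset.range (2^n),
        ∏ i ∈ Finset.range (n+1), g i (m.testBit i)
          = (∏ i ∈ Finset.range n, g i (m.testBit i)) * g n false := by
      intro m hm
      rw [Finset.prod_range_succ, Nat.testBit_lt_two_pow (Finset.mem_range.mp hm)]
    have e2 : ∀ m ∈ Finset.range (2^n),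
        ∏ i ∈ Finset.range (n+1), g i ((addLeftEmbedding (2^n) m).testBit i)
          = (∏ i ∈ Finset.range n, g i (m.testBit i)) * g n true := by
      intro m hm
      have hm' : m < 2 ^ n := Finset.mem_range.mp hm
      rw [Finset.prod_range_succ]
      congr 1
      · refine Finset.prod_congr rfl fun i hi => ?_
        rw [addLeftEmbedding_apply, Nat.testBit_two_pow_add_gt (Finset.mem_range.mp hi) m]
      · rw [addLeftEmbedding_apply, Nat.testBit_two_pow_add_eq,
          Nat.testBit_lt_two_pow hm']
        rfl
    rw [Finset.sum_congr rfl e1, Finset.sum_congr rfl e2, ← Finset.sum_mul,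
      ← Finset.sum_mul, ih, Finset.prod_range_succ]
    ring

/-- **The mutation heuristic in the Walsh basis.**  For `x ∈ Λ`, independent bitwise
mutation with rates `p_i ∈ [0,1]`, `q_i = 1 - 2p_i`, and `y = U(x)`: for every `u ∈ Ω`
and `k ∈ Ω_u`, `ŷ_k^{(u)} = x̂_k^{(u)} ∏_{i ∈ I(k)} q_i`
(where `ẑ_k^{(u)} = 2^{#ū/2} (Wz)_k`). -/
theorem mutation_heuristic_walsh
    (ℓ : ℕ) (hℓ : 1 ≤ ℓ) (x : ℕ → ℝ)
    (hx0 : ∀ i ∈ Finset.range (2 ^ ℓ), 0 ≤ x i)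
    (hx1 : ∑ i ∈ Finset.range (2 ^ ℓ), x i = 1)
    (p : ℕ → ℝ) (hp : ∀ i < ℓ, p i ∈ Set.Icc (0 : ℝ) 1)
    (u : ℕ) (hu : u < 2 ^ ℓ) (k : ℕ) (hk : k ∈ omg ℓ u) :
    Real.sqrt 2 ^ pc (cpl ℓ u) * walsh ℓ (mutH ℓ (mutDist ℓ p) x) k =
      (Real.sqrt 2 ^ pc (cpl ℓ u) * walsh ℓ x k) * ∏ i ∈ idx ℓ k, (1 - 2 * p i) := by
  have hkr : k < 2 ^ ℓ := by
    have := hk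
    simp only [omg, Finset.mem_filter, Finset.mem_range] at this
    exact this.1
  have main : ∑ j ∈ Finset.range (2 ^ ℓ),
        (-1 : ℝ) ^ pc (k &&& j) * mutH ℓ (mutDist ℓ p) x j
      = (∑ m ∈ Finset.range (2 ^ ℓ), (-1 : ℝ) ^ pc (k &&& m) * mutDist ℓ p m)
        * ∑ j ∈ Finset.range (2 ^ ℓ), (-1 : ℝ) ^ pc (k &&& j) * x j := by
    calc ∑ j ∈ Finset.range (2 ^ ℓ), (-1 : ℝ) ^ pc (k &&& j) * mutH ℓ (mutDist ℓ p) x j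
        = ∑ j ∈ Finset.range (2 ^ ℓ), ∑ j' ∈ Finset.range (2 ^ ℓ),
            (-1 : ℝ) ^ pc (k &&& j) * (mutDist ℓ p (j' ^^^ j) * x j') := by
          simp [mutH, Finset.mul_sum]
      _ = ∑ j' ∈ Finset.range (2 ^ ℓ), ∑ j ∈ Finset.range (2 ^ ℓ),
            (-1 : ℝ) ^ pc (k &&& j) * (mutDist ℓ p (j' ^^^ j) * x j') := Finset.sum_comm
      _ = ∑ j' ∈ Finset.range (2 ^ ℓ), ∑ m ∈ Finset.range (2 ^ ℓ),
            (-1 : ℝ) ^ pc (k &&& (j' ^^^ m)) * (mutDist ℓ p m * x j') := by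
          refine Finset.sum_congr rfl fun j' hj' => ?_
          have hj'r : j' < 2 ^ ℓ := Finset.mem_range.mp hj'
          refine Finset.sum_nbij' (fun j => j' ^^^ j) (fun m => j' ^^^ m) ?_ ?_ ?_ ?_ ?_
          · intro a ha
            exact Finset.mem_range.mpr (Nat.xor_lt_two_pow hj'r (Finset.mem_range.mp ha))
          · intro a ha
            exact Finset.mem_range.mpr (Nat.xor_lt_two_pow hj'r (Finset.mem_range.mp ha))
          · intro a _; simp [← Nat.xor_assoc]
          · intro a _; simp [← Nat.xor_assoc]
          · intro a _
            simp [← Nat.xor_assoc]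
      _ = ∑ j' ∈ Finset.range (2 ^ ℓ),
            ((-1 : ℝ) ^ pc (k &&& j') * x j')
              * ∑ m ∈ Finset.range (2 ^ ℓ), (-1 : ℝ) ^ pc (k &&& m) * mutDist ℓ p m := by
          refine Finset.sum_congr rfl fun j' hj' => ?_
          rw [Finset.mul_sum]
          refine Finset.sum_congr rfl fun m hm => ?_
          rw [neg_one_pc_and_xor hkr]
          ring
      _ = _ := by rw [← Finset.sum_mul]; ring
  have hμ : ∑ m ∈ Finset.range (2 ^ ℓ), (-1 : ℝ) ^ pc (k &&& m) * mutDist ℓ p m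
      = ∏ i ∈ idx ℓ k, (1 - 2 * p i) := by
    have e : ∀ m ∈ Finset.range (2 ^ ℓ),
        (-1 : ℝ) ^ pc (k &&& m) * mutDist ℓ p m
          = ∏ i ∈ Finset.range ℓ,
              ((if k.testBit i && m.testBit i then (-1:ℝ) else 1)
                * (if m.testBit i then p i else 1 - p i)) := by
      intro m hm
      rw [neg_one_pc (lt_of_le_of_lt Nat.and_le_left hkr), mutDist,
        ← Finset.prod_mul_distrib]
      refine Finset.prod_congr rfl fun i _ => ?_
      rw [Nat.testBit_and]
    rw [Finset.sum_congr rfl e,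
      sum_prod_testBit ℓ (fun i b =>
        (if k.testBit i && b then (-1:ℝ) else 1) * (if b then p i else 1 - p i))]
    rw [idx, Finset.prod_filter]
    refine Finset.prod_congr rfl fun i _ => ?_
    cases h : k.testBit i <;> simp [h] <;> ring
  rw [walsh, walsh, main, hμ]
  ring
end
end
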